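/- arXiv:2507.10406 — 2 statements merged into one kernel-verified Lean document; each statement's English description precedes it below -/
import Mathlib

section
/- Characterization of vacuum-free equilibria at the bifurcation point: suppose the 2π-periodic kernel V satisfies that its Fourier coefficient matrix \widehat V(ℓ) ∈ ℂ^{P×P} is invertible for all |ℓ| ≥ 2, has one-dimensional kernel spanned by e₀ at |ℓ| = 1, and \widehat V(0) is invertible. Then every continuous solution u : ℝ → ℝ^P, 2π-periodic, of ∫_0^{2π} V(x−y)u(y)dy = ρ for some constant ρ ∈ ℝ^P, with mean value 1_P, is of the form u(x) = 1_P + (a cos x + b sin x) e₀ for some real a, b. -/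
open Real MeasureTheory intervalIntegral

lemma orth (k : ℤ) : (∫ x in (0:ℝ)..(2*π), Complex.exp (Complex.I * k * x))
    = if k = 0 then ((2*π:ℝ):ℂ) else 0 := by
  rcases eq_or_ne k 0 with hk | hk
  · simp [hk]
  · rw [if_neg hk]
    have hc : (Complex.I * k) ≠ 0 := by
      simp [Complex.I_ne_zero, Complex.ext_iff]
      exact_mod_cast hk
    have := integral_exp_mul_complex (a := 0) (b := 2*π) hc
    simp only [mul_assoc] at this ⊢
    rw [this]
    have h1 : Complex.I * ((k:ℂ) * ((2*π:ℝ):ℂ)) = (k:ℤ) * (2*π*Complex.I) := by push_cast; ring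
    rw [h1, Complex.exp_int_mul_two_pi_mul_I]
    simp

lemma kercoeff (P : ℕ) (V : ℝ → Matrix (Fin P) (Fin P) ℝ)
    (Vhat : ℤ → Matrix (Fin P) (Fin P) ℂ)
    (hVsum : ∀ p q : Fin P, Summable fun ℓ : ℤ => ‖Vhat ℓ p q‖)
    (hVfourier : ∀ ξ : ℝ, ∀ p q : Fin P,
      (V ξ p q : ℂ) = ∑' ℓ : ℤ, Vhat ℓ p q * Complex.exp (Complex.I * ℓ * ξ))
    (y : ℝ) (ℓ : ℤ) (p q : Fin P) :
    (∫ x in (0:ℝ)..(2*π), (V (x - y) p q : ℂ) * Complex.exp (-Complex.I * ℓ * x))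
      = (2*π) * Vhat ℓ p q * Complex.exp (-Complex.I * ℓ * y) := by
  set F : ℤ → C(ℝ, ℂ) := fun m =>
    ⟨fun x => (Vhat m p q * Complex.exp (-Complex.I * m * y)) *
        Complex.exp (Complex.I * (m - ℓ : ℤ) * x), by fun_prop⟩ with hF
  have hpt : ∀ x : ℝ, (V (x - y) p q : ℂ) * Complex.exp (-Complex.I * ℓ * x)
      = ∑' m : ℤ, F m x := by
    intro x
    rw [hVfourier (x - y) p q, ← tsum_mul_right]
    congr 1; funext m
    simp only [hF, ContinuousMap.coe_mk, mul_assoc, ← Complex.exp_add]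
    congr 1
    congr 1
    push_cast
    ring
  have hsum : Summable fun m : ℤ =>
      ‖(F m).restrict (⟨Set.uIcc (0:ℝ) (2*π), isCompact_uIcc⟩ : TopologicalSpace.Compacts ℝ)‖ := by
    apply Summable.of_nonneg_of_le (fun m => norm_nonneg _) _ (hVsum p q)
    intro m
    rw [ContinuousMap.norm_le _ (norm_nonneg _)]
    rintro ⟨x, hx⟩
    simp only [ContinuousMap.restrict_apply, hF, ContinuousMap.coe_mk]
    rw [norm_mul, norm_mul]
    have h1 : ‖Complex.exp (-Complex.I * m * y)‖ = 1 := by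
      rw [Complex.norm_exp]
      simp
    have h2 : ‖Complex.exp (Complex.I * ((m : ℤ) - ℓ : ℤ) * x)‖ = 1 := by
      rw [Complex.norm_exp]
      simp
    rw [h1, h2]; simp
  calc (∫ x in (0:ℝ)..(2*π), (V (x - y) p q : ℂ) * Complex.exp (-Complex.I * ℓ * x))
      = ∫ x in (0:ℝ)..(2*π), ∑' m : ℤ, F m x := by
        apply intervalIntegral.integral_congr
        intro x _; exact hpt x
    _ = ∑' m : ℤ, ∫ x in (0:ℝ)..(2*π), F m x :=
        (intervalIntegral.tsum_intervalIntegral_eq_of_summable_norm hsum).symm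
    _ = (2*π) * Vhat ℓ p q * Complex.exp (-Complex.I * ℓ * y) := by
        have hone : ∀ m : ℤ, (∫ x in (0:ℝ)..(2*π), F m x)
            = (Vhat m p q * Complex.exp (-Complex.I * m * y)) *
              (if (m - ℓ : ℤ) = 0 then ((2*π:ℝ):ℂ) else 0) := by
          intro m
          simp only [hF, ContinuousMap.coe_mk]
          rw [intervalIntegral.integral_const_mul, orth]
        rw [tsum_eq_single ℓ]
        · rw [hone]; simp; ring
        · intro m hm
          rw [hone, if_neg (sub_ne_zero.mpr hm), mul_zero]

lemma coeff_vanish (P : ℕ) (V : ℝ → Matrix (Fin P) (Fin P) ℝ)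
    (Vhat : ℤ → Matrix (Fin P) (Fin P) ℂ)
    (hVsum : ∀ p q : Fin P, Summable fun ℓ : ℤ => ‖Vhat ℓ p q‖)
    (hVfourier : ∀ ξ : ℝ, ∀ p q : Fin P,
      (V ξ p q : ℂ) = ∑' ℓ : ℤ, Vhat ℓ p q * Complex.exp (Complex.I * ℓ * ξ))
    (hVcont : Continuous V)
    (u : ℝ → Fin P → ℝ) (hucont : Continuous u)
    (ρ : Fin P → ℝ)
    (heq : ∀ x, ∀ p : Fin P,
      (∫ y in (0:ℝ)..(2 * π), (V (x - y)).mulVec (u y) p) = ρ p)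
    (ℓ : ℤ) (hℓ : ℓ ≠ 0) :
    (Vhat ℓ).mulVec
      (fun q => ∫ y in (0:ℝ)..(2*π), (u y q : ℂ) * Complex.exp (-Complex.I * ℓ * y)) = 0 := by
  have h2π : (0:ℝ) ≤ 2*π := by positivity
  funext p
  -- continuity facts
  have hVc : ∀ q : Fin P, Continuous fun z : ℝ × ℝ => (V (z.1 - z.2) p q : ℂ) := by
    intro q
    apply Complex.continuous_ofReal.comp
    exact ((continuous_apply q).comp ((continuous_apply p).comp hVcont)).comp
      (continuous_fst.sub continuous_snd)
  have huc : ∀ q : Fin P, Continuous fun y : ℝ => (u y q : ℂ) :=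
    fun q => Complex.continuous_ofReal.comp ((continuous_apply q).comp hucont)
  set g : ℝ × ℝ → ℂ := fun z =>
    (∑ q : Fin P, (V (z.1 - z.2) p q : ℂ) * (u z.2 q : ℂ)) * Complex.exp (-Complex.I * ℓ * z.1)
    with hg
  have hgc : Continuous g := by
    apply Continuous.mul
    · exact continuous_finset_sum _ fun q _ => (hVc q).mul ((huc q).comp continuous_snd)
    · exact Complex.continuous_exp.comp (by fun_prop)
  -- step 1 : zero from RHS
  have hzero : (∫ x in (0:ℝ)..(2*π), ∫ y in (0:ℝ)..(2*π), g (x, y)) = 0 := by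
    have : ∀ x : ℝ, (∫ y in (0:ℝ)..(2*π), g (x, y))
        = ((ρ p : ℂ)) * Complex.exp (-Complex.I * ℓ * x) := by
      intro x
      rw [← heq x p]
      rw [← intervalIntegral.integral_ofReal, ← intervalIntegral.integral_mul_const]
      apply intervalIntegral.integral_congr
      intro y _
      simp only [hg, Matrix.mulVec, dotProduct]
      push_cast
      rfl
    rw [intervalIntegral.integral_congr (g := fun x => ((ρ p : ℂ)) * Complex.exp (-Complex.I * ℓ * x)) (fun x _ => this x)]
    rw [intervalIntegral.integral_const_mul]
    have : ∀ x : ℝ, -Complex.I * ℓ * x = Complex.I * (-ℓ : ℤ) * x := by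
      intro x; push_cast; ring
    simp_rw [this]
    rw [orth]
    simp [hℓ]
  -- step 2 : Fubini
  have hswap : (∫ x in (0:ℝ)..(2*π), ∫ y in (0:ℝ)..(2*π), g (x, y))
      = ∫ y in (0:ℝ)..(2*π), ∫ x in (0:ℝ)..(2*π), g (x, y) := by
    simp only [intervalIntegral.integral_of_le h2π]
    apply MeasureTheory.integral_integral_swap
    have h1 : IntegrableOn g ((Set.Ioc (0:ℝ) (2*π)) ×ˢ (Set.Ioc (0:ℝ) (2*π))) volume :=
      (hgc.continuousOn.integrableOn_compact (isCompact_Icc.prod isCompact_Icc)).mono_set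
        (Set.prod_mono Set.Ioc_subset_Icc_self Set.Ioc_subset_Icc_self)
    rw [Measure.prod_restrict, ← Measure.volume_eq_prod]
    exact h1
  -- step 3 : compute inner integral
  have hinner : ∀ y : ℝ, (∫ x in (0:ℝ)..(2*π), g (x, y))
      = ∑ q : Fin P, (2*π) * Vhat ℓ p q *
          ((u y q : ℂ) * Complex.exp (-Complex.I * ℓ * y)) := by
    intro y
    have : ∀ x : ℝ, g (x, y) = ∑ q : Fin P,
        (u y q : ℂ) * ((V (x - y) p q : ℂ) * Complex.exp (-Complex.I * ℓ * x)) := by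
      intro x
      simp only [hg, Finset.sum_mul]
      congr 1; funext q; ring
    rw [intervalIntegral.integral_congr (fun x _ => this x)]
    rw [intervalIntegral.integral_finset_sum]
    · congr 1; funext q
      rw [intervalIntegral.integral_const_mul, kercoeff P V Vhat hVsum hVfourier y ℓ p q]
      ring
    · intro q _
      apply Continuous.intervalIntegrable
      exact continuous_const.mul (((hVc q).comp (continuous_id.prodMk continuous_const)).mul
        (by fun_prop : Continuous fun x : ℝ => Complex.exp (-Complex.I * ℓ * x)))
  -- combine
  have : (∫ y in (0:ℝ)..(2*π), ∑ q : Fin P, (2*π) * Vhat ℓ p q *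
      ((u y q : ℂ) * Complex.exp (-Complex.I * ℓ * y))) = 0 := by
    rw [← intervalIntegral.integral_congr (fun y _ => hinner y), ← hswap, hzero]
  rw [intervalIntegral.integral_finset_sum] at this
  · have hterm : ∀ q : Fin P, (∫ y in (0:ℝ)..(2*π),
        (2*π) * Vhat ℓ p q * ((u y q : ℂ) * Complex.exp (-Complex.I * ℓ * y)))
        = ((2:ℂ)*(π:ℂ)) * (Vhat ℓ p q *
          ∫ y in (0:ℝ)..(2*π), (u y q : ℂ) * Complex.exp (-Complex.I * ℓ * y)) := by
      intro q
      rw [intervalIntegral.integral_const_mul, mul_assoc]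
    rw [Finset.sum_congr rfl (fun q _ => hterm q), ← Finset.mul_sum] at this
    have h2 : ((2:ℂ)*(π:ℂ)) ≠ 0 := by
      simp [Real.pi_ne_zero, Complex.ext_iff]
    simp only [Matrix.mulVec, dotProduct, Pi.zero_apply]
    exact (mul_eq_zero.mp this).resolve_left h2
  · intro q _
    apply Continuous.intervalIntegrable
    exact continuous_const.mul ((huc q).mul
      (by fun_prop : Continuous fun y : ℝ => Complex.exp (-Complex.I * ℓ * y)))

/-- Characterization of vacuum-free equilibria at the bifurcation point: if the Fourier
coefficient matrices `V̂ ℓ` of the `2π`-periodic matrix kernel `V` are invertible for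
`ℓ = 0` and `|ℓ| ≥ 2`, and have a one-dimensional kernel spanned by `e₀` for `|ℓ| = 1`,
then every continuous `2π`-periodic solution `u` of `∫ V(x−y) u(y) dy = ρ` with mean
`1_P` has the form `u(x) = 1_P + (a cos x + b sin x) e₀`. -/
theorem vacuum_free_equilibria_characterization (P : ℕ) (hP : 0 < P)
    (V : ℝ → Matrix (Fin P) (Fin P) ℝ)
    (Vhat : ℤ → Matrix (Fin P) (Fin P) ℂ)
    (hVsum : ∀ p q : Fin P, Summable fun ℓ : ℤ => ‖Vhat ℓ p q‖)
    (hVfourier : ∀ ξ : ℝ, ∀ p q : Fin P,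
      (V ξ p q : ℂ) = ∑' ℓ : ℤ, Vhat ℓ p q * Complex.exp (Complex.I * ℓ * ξ))
    (hVcont : Continuous V)
    (hinv : ∀ ℓ : ℤ, ℓ ≠ 1 → ℓ ≠ -1 → IsUnit (Vhat ℓ))
    (e₀ : Fin P → ℝ) (he₀ : e₀ ≠ 0)
    (hker : ∀ ℓ : ℤ, ℓ = 1 ∨ ℓ = -1 → ∀ w : Fin P → ℂ,
      (Vhat ℓ).mulVec w = 0 ↔ ∃ c : ℂ, w = c • fun p => (e₀ p : ℂ))
    (u : ℝ → Fin P → ℝ) (hucont : Continuous u)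
    (huper : ∀ x, u (x + 2 * π) = u x)
    (ρ : Fin P → ℝ)
    (heq : ∀ x, ∀ p : Fin P,
      (∫ y in (0:ℝ)..(2 * π), (V (x - y)).mulVec (u y) p) = ρ p)
    (hmean : ∀ p : Fin P, (1 / (2 * π)) * ∫ y in (0:ℝ)..(2 * π), u y p = 1) :
    ∃ a b : ℝ, ∀ x, u x = fun p => 1 + (a * Real.cos x + b * Real.sin x) * e₀ p := by
  have h2π : (0:ℝ) ≤ 2*π := by positivity
  haveI : Fact (0 < 2*π) := ⟨by positivity⟩
  set uh : ℤ → Fin P → ℂ := fun ℓ q =>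
    ∫ y in (0:ℝ)..(2*π), (u y q : ℂ) * Complex.exp (-Complex.I * ℓ * y) with huh
  -- vanishing of coefficients for |ℓ| ≥ 2
  have hvan : ∀ ℓ : ℤ, ℓ ≠ 0 → ℓ ≠ 1 → ℓ ≠ -1 → uh ℓ = 0 := by
    intro ℓ h0 h1 hm1
    have hmv := coeff_vanish P V Vhat hVsum hVfourier hVcont u hucont ρ heq ℓ h0
    have hi : Function.Injective ((Vhat ℓ).mulVec) :=
      Matrix.mulVec_injective_iff_isUnit.mpr (hinv ℓ h1 hm1)
    apply hi
    rw [hmv, Matrix.mulVec_zero]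
  -- coefficients at ±1
  obtain ⟨c, hc⟩ := (hker 1 (Or.inl rfl) (uh 1)).mp
    (coeff_vanish P V Vhat hVsum hVfourier hVcont u hucont ρ heq 1 one_ne_zero)
  obtain ⟨d, hd⟩ := (hker (-1) (Or.inr rfl) (uh (-1))).mp
    (coeff_vanish P V Vhat hVsum hVfourier hVcont u hucont ρ heq (-1) (by norm_num))
  -- coefficient at 0
  have huh0 : ∀ p : Fin P, uh 0 p = ((2*π : ℝ) : ℂ) := by
    intro p
    have hm : (∫ y in (0:ℝ)..(2*π), u y p) = 2*π := by
      have := hmean p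
      have hpi : (2*π) ≠ 0 := by positivity
      field_simp at this
      linarith
    have : uh 0 p = ∫ y in (0:ℝ)..(2*π), ((u y p : ℝ) : ℂ) := by
      apply intervalIntegral.integral_congr
      intro y _
      simp
    rw [this, intervalIntegral.integral_ofReal, hm]
  -- conjugation symmetry : uh (-1) = conj (uh 1)
  have hconj : ∀ p : Fin P, uh (-1) p = (starRingEnd ℂ) (uh 1 p) := by
    intro p
    have h1 : uh (-1) p = ∫ y in (0:ℝ)..(2*π),
        (starRingEnd ℂ) ((u y p : ℂ) * Complex.exp (-Complex.I * (1:ℤ) * y)) := by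
      apply intervalIntegral.integral_congr
      intro y _
      show (u y p : ℂ) * Complex.exp (-Complex.I * ((-1:ℤ):ℂ) * y)
          = (starRingEnd ℂ) ((u y p : ℂ) * Complex.exp (-Complex.I * ((1:ℤ):ℂ) * y))
      rw [map_mul, Complex.conj_ofReal, ← Complex.exp_conj]
      congr 2
      simp [Complex.ext_iff]
    rw [h1, intervalIntegral.integral_of_le h2π, integral_conj,
      ← intervalIntegral.integral_of_le h2π]
  -- d = conj c
  have hq0 : ∃ q : Fin P, e₀ q ≠ 0 := by
    by_contra h
    push_neg at h
    exact he₀ (funext fun q => h q)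
  obtain ⟨q₀, hq₀⟩ := hq0
  have hdc : d = (starRingEnd ℂ) c := by
    have h1 := hconj q₀
    rw [hc, hd] at h1
    simp only [Pi.smul_apply, smul_eq_mul, map_mul, Complex.conj_ofReal] at h1
    have he : ((e₀ q₀ : ℝ) : ℂ) ≠ 0 := by exact_mod_cast hq₀
    exact mul_right_cancel₀ he h1
  -- Fourier reconstruction
  refine ⟨c.re / π, -c.im / π, fun x => funext fun p => ?_⟩
  have hper : Function.Periodic (fun t => (u t p : ℂ)) (2*π) := by
    intro t
    simp [huper t]
  set F : C(AddCircle (2*π), ℂ) :=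
    ⟨hper.lift, (QuotientAddGroup.isQuotientMap_mk _).continuous_iff.mpr
      (Complex.continuous_ofReal.comp ((continuous_apply p).comp hucont))⟩ with hF
  have hcoeff : ∀ n : ℤ, fourierCoeff (F : AddCircle (2*π) → ℂ) n
      = ((1/(2*π) : ℝ) : ℂ) * uh n p := by
    intro n
    rw [fourierCoeff_eq_intervalIntegral (F : AddCircle (2*π) → ℂ) n 0, zero_add]
    rw [Complex.real_smul]
    congr 1
    apply intervalIntegral.integral_congr
    intro y _
    have harg : (2*π*Complex.I*((-n : ℤ):ℂ)*(y:ℂ)/((2*π:ℝ):ℂ)) = -Complex.I*n*y := by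
      have hpi : ((π:ℝ):ℂ) ≠ 0 := by
        exact_mod_cast Real.pi_ne_zero
      push_cast
      field_simp
    show (fourier (-n) (y : AddCircle (2*π))) • (F (y : AddCircle (2*π))) = _
    rw [fourier_coe_apply, harg]
    have hFy : F ((y : ℝ) : AddCircle (2*π)) = (u y p : ℂ) := rfl
    rw [hFy, smul_eq_mul, mul_comm]
  have hsummable : Summable (fourierCoeff (F : AddCircle (2*π) → ℂ)) := by
    apply summable_of_ne_finset_zero (s := ({-1, 0, 1} : Finset ℤ))
    intro n hn
    simp only [Finset.mem_insert, Finset.mem_singleton] at hn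
    push_neg at hn
    rw [hcoeff n, hvan n hn.2.1 hn.2.2 hn.1, Pi.zero_apply, mul_zero]
  have hsum := has_pointwise_sum_fourier_series_of_summable hsummable ((x : ℝ) : AddCircle (2*π))
  have hsupp : ∀ n : ℤ, n ∉ ({-1, 0, 1} : Finset ℤ) →
      fourierCoeff (F : AddCircle (2*π) → ℂ) n • fourier n ((x:ℝ) : AddCircle (2*π)) = 0 := by
    intro n hn
    simp only [Finset.mem_insert, Finset.mem_singleton] at hn
    push_neg at hn
    rw [hcoeff n, hvan n hn.2.1 hn.2.2 hn.1, Pi.zero_apply, mul_zero, zero_smul]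
  have hval : F ((x:ℝ) : AddCircle (2*π)) = ∑ n ∈ ({-1, 0, 1} : Finset ℤ),
      fourierCoeff (F : AddCircle (2*π) → ℂ) n • fourier n ((x:ℝ) : AddCircle (2*π)) :=
    hsum.unique (hasSum_sum_of_ne_finset_zero hsupp)
  have hFx : F ((x : ℝ) : AddCircle (2*π)) = (u x p : ℂ) := rfl
  rw [hFx] at hval
  -- evaluate the finite sum
  have hfour : ∀ n : ℤ, (fourier n ((x:ℝ) : AddCircle (2*π)) : ℂ)
      = Complex.exp (Complex.I * n * x) := by
    intro n
    rw [fourier_coe_apply]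
    congr 1
    have hpi : ((π:ℝ):ℂ) ≠ 0 := by exact_mod_cast Real.pi_ne_zero
    push_cast
    field_simp
  rw [Finset.sum_insert (by decide), Finset.sum_insert (by decide), Finset.sum_singleton] at hval
  rw [hcoeff, hcoeff, hcoeff, huh0 p] at hval
  have hc1 : uh 1 p = c * (e₀ p : ℂ) := by rw [hc]; simp
  have hcm1 : uh (-1) p = (starRingEnd ℂ) c * (e₀ p : ℂ) := by rw [hd, hdc]; simp
  rw [hc1, hcm1] at hval
  simp only [smul_eq_mul, hfour] at hval
  -- now pure computation
  have hpi : (π : ℂ) ≠ 0 := by exact_mod_cast Real.pi_ne_zero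
  have hexp0 : Complex.exp (Complex.I * ((0:ℤ):ℂ) * x) = 1 := by
    norm_num
  have hexp1 : Complex.exp (Complex.I * ((1:ℤ):ℂ) * x) = (Real.cos x : ℂ) + (Real.sin x : ℂ) * Complex.I := by
    rw [show Complex.I * ((1:ℤ):ℂ) * x = (x:ℂ) * Complex.I by push_cast; ring,
      Complex.exp_mul_I]
    simp [← Complex.ofReal_cos, ← Complex.ofReal_sin]
  have hexpm1 : Complex.exp (Complex.I * ((-1:ℤ):ℂ) * x) = (Real.cos x : ℂ) - (Real.sin x : ℂ) * Complex.I := by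
    rw [show Complex.I * ((-1:ℤ):ℂ) * x = (-(x:ℂ)) * Complex.I by push_cast; ring,
      Complex.exp_mul_I]
    simp [← Complex.ofReal_cos, ← Complex.ofReal_sin]
    ring
  have hcc : (starRingEnd ℂ) c = (c.re : ℂ) - (c.im : ℂ) * Complex.I := by
    simp [Complex.ext_iff]
  apply Complex.ofReal_injective
  rw [hval]
  rw [hexp0, hexp1, hexpm1, hcc]
  set cr := c.re with hcrdef
  set ci := c.im with hcidef
  rw [show c = (cr:ℂ) + (ci:ℂ) * Complex.I by
    rw [hcrdef, hcidef]; exact (Complex.re_add_im c).symm]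
  push_cast
  have hpi2 : ((π:ℝ):ℂ) ≠ 0 := by exact_mod_cast Real.pi_ne_zero
  field_simp
  ring_nf
  simp only [Complex.I_sq]
  ring
end

section
/- The operator 𝓛_h v(z) = v(z) − ∫_{−π}^π ∑_{k≥2} v_k cos(k(z−ξ)) v(ξ) dξ, acting on the closed subspace X_h of continuous 2π-periodic even functions orthogonal to 1 and cos, is boundedly invertible provided |v_k| < 1/π for all k ≥ 2 and ∑_{k≥2}|v_k| < ∞. -/
open Real MeasureTheory intervalIntegral

lemma integral_cos_int (m : ℤ) (hm : m ≠ 0) : ∫ ξ in (-π)..π, Real.cos (m * ξ) = 0 := by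
  have hm' : (m : ℝ) ≠ 0 := Int.cast_ne_zero.2 hm
  rw [intervalIntegral.integral_comp_mul_left Real.cos hm', integral_cos]
  have h1 : Real.sin ((m : ℝ) * π) = 0 := Real.sin_int_mul_pi m
  have h2 : Real.sin ((m : ℝ) * (-π)) = 0 := by
    rw [mul_neg, Real.sin_neg, h1, neg_zero]
  rw [h1, h2]; simp

lemma integral_odd_zero (f : ℝ → ℝ) (hodd : ∀ x, f (-x) = - f x) :
    ∫ ξ in (-π)..π, f ξ = 0 := by
  have h1 : (∫ ξ in (-π)..π, f (-ξ)) = ∫ ξ in (-π)..π, f ξ := by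
    rw [intervalIntegral.integral_comp_neg]; norm_num
  have h2 : (∫ ξ in (-π)..π, f (-ξ)) = - ∫ ξ in (-π)..π, f ξ := by
    rw [show (fun ξ => f (-ξ)) = fun ξ => -(f ξ) from funext hodd]
    exact intervalIntegral.integral_neg
  linarith

lemma integral_cos_mul_cos_orth (k j : ℕ) (hk : 1 ≤ k) (hj : 1 ≤ j) :
    ∫ ξ in (-π)..π, Real.cos (k * ξ) * Real.cos (j * ξ) = if k = j then π else 0 := by
  have h1 : ∀ ξ : ℝ, Real.cos (k * ξ) * Real.cos (j * ξ)
      = Real.cos (((k : ℤ) - j : ℤ) * ξ) / 2 + Real.cos (((k : ℤ) + j : ℤ) * ξ) / 2 := by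
    intro ξ
    have h := Real.two_mul_cos_mul_cos ((k : ℝ) * ξ) ((j : ℝ) * ξ)
    have e1 : (k : ℝ) * ξ - (j : ℝ) * ξ = (((k : ℤ) - j : ℤ) : ℝ) * ξ := by push_cast; ring
    have e2 : (k : ℝ) * ξ + (j : ℝ) * ξ = (((k : ℤ) + j : ℤ) : ℝ) * ξ := by push_cast; ring
    rw [e1, e2] at h; linarith
  rw [intervalIntegral.integral_congr (g := fun ξ =>
      Real.cos (((k : ℤ) - j : ℤ) * ξ) / 2 + Real.cos (((k : ℤ) + j : ℤ) * ξ) / 2)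
      (fun ξ _ => h1 ξ)]
  have hint1 : IntervalIntegrable (fun ξ => Real.cos (((k : ℤ) - j : ℤ) * ξ) / 2) volume (-π) π :=
    (Continuous.div_const (Real.continuous_cos.comp (continuous_const.mul continuous_id)) 2).intervalIntegrable _ _
  have hint2 : IntervalIntegrable (fun ξ => Real.cos (((k : ℤ) + j : ℤ) * ξ) / 2) volume (-π) π :=
    (Continuous.div_const (Real.continuous_cos.comp (continuous_const.mul continuous_id)) 2).intervalIntegrable _ _
  rw [intervalIntegral.integral_add hint1 hint2, intervalIntegral.integral_div,
    intervalIntegral.integral_div]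
  have hpos : ((k : ℤ) + j) ≠ 0 := by omega
  rw [integral_cos_int _ hpos]
  by_cases hkj : k = j
  · subst hkj
    have : ((k : ℤ) - k) = 0 := by ring
    rw [this]
    simp only [Int.cast_zero, zero_mul, Real.cos_zero]
    rw [intervalIntegral.integral_const]
    simp [two_mul]
  · have : ((k : ℤ) - j) ≠ 0 := by omega
    rw [integral_cos_int _ this]
    simp [hkj]

lemma integral_tsum_swap (F : ℕ → ℝ → ℝ) (hc : ∀ k, Continuous (F k))
    (b : ℕ → ℝ) (hb : Summable b) (hFb : ∀ k ξ, |F k ξ| ≤ b k) :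
    ∫ ξ in (-π)..π, (∑' k, F k ξ) = ∑' k, ∫ ξ in (-π)..π, F k ξ := by
  have hle : (-π : ℝ) ≤ π := by linarith [Real.pi_pos]
  rw [intervalIntegral.integral_of_le hle]
  have heq : ∀ k, (∫ ξ in (-π)..π, F k ξ) = ∫ ξ in Set.Ioc (-π) π, F k ξ := fun k =>
    intervalIntegral.integral_of_le hle
  simp_rw [heq]
  refine (MeasureTheory.integral_tsum_of_summable_integral_norm (fun k => ?_) ?_).symm
  · exact ((hc k).integrableOn_Ioc : IntegrableOn _ _ volume)
  · apply Summable.of_nonneg_of_le (fun k => ?_) (fun k => ?_) (hb.mul_right (2 * π))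
    · exact integral_nonneg (fun x => norm_nonneg _)
    · calc (∫ ξ in Set.Ioc (-π) π, ‖F k ξ‖) ≤ ∫ _ξ in Set.Ioc (-π) π, b k := by
            apply integral_mono_of_nonneg
            · exact Filter.Eventually.of_forall fun x => norm_nonneg _
            · exact integrable_const _
            · exact Filter.Eventually.of_forall fun x => hFb k x
          _ = b k * (2 * π) := by
            rw [MeasureTheory.setIntegral_const, smul_eq_mul, mul_comm]
            congr 1
            rw [measureReal_def, Real.volume_Ioc]
            rw [ENNReal.toReal_ofReal (by linarith [Real.pi_pos])]
            ring

lemma periodic_cont_bound (g : ℝ → ℝ) (hg : Continuous g) (hp : Function.Periodic g (2 * π)) :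
    ∃ z₀ : ℝ, ∀ x, |g x| ≤ |g z₀| := by
  have hcomp : IsCompact (Set.Icc (-π) π) := isCompact_Icc
  have hne : (Set.Icc (-π) π).Nonempty := ⟨0, by constructor <;> linarith [Real.pi_pos]⟩
  obtain ⟨z₀, _, hmax⟩ := hcomp.exists_isMaxOn hne ((continuous_abs.comp hg).continuousOn)
  refine ⟨z₀, fun x => ?_⟩
  obtain ⟨y, hy, hxy⟩ := hp.exists_mem_Ico (by linarith [Real.pi_pos]) x (-π)
  have hy' : y ∈ Set.Icc (-π) π := ⟨hy.1, by have := hy.2; linarith⟩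
  have := hmax hy'
  simp only [Function.comp] at this
  rw [hxy]
  exact this

noncomputable def tc (g : ℝ → ℝ) (k : ℕ) : ℝ := ∫ ξ in (-π)..π, g ξ * Real.cos (k * ξ)

noncomputable def cser (b : ℕ → ℝ) (z : ℝ) : ℝ :=
  ∑' k : ℕ, if 2 ≤ k then b k * Real.cos (k * z) else 0

lemma cser_term_cont (b : ℕ → ℝ) (k : ℕ) :
    Continuous fun z : ℝ => if 2 ≤ k then b k * Real.cos (k * z) else 0 := by
  split_ifs
  · exact continuous_const.mul (Real.continuous_cos.comp (continuous_const.mul continuous_id))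
  · exact continuous_const

lemma cser_term_bound (b : ℕ → ℝ) (k : ℕ) (z : ℝ) :
    |if 2 ≤ k then b k * Real.cos (k * z) else 0| ≤ |b k| := by
  split_ifs
  · rw [abs_mul]
    calc |b k| * |Real.cos (k * z)| ≤ |b k| * 1 :=
          mul_le_mul_of_nonneg_left (Real.abs_cos_le_one _) (abs_nonneg _)
      _ = |b k| := mul_one _
  · simp

lemma cser_cont (b : ℕ → ℝ) (hb : Summable fun k => |b k|) : Continuous (cser b) :=
  continuous_tsum (fun k => cser_term_cont b k) hb (fun k z => cser_term_bound b k z)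

lemma cser_summable (b : ℕ → ℝ) (hb : Summable fun k => |b k|) (z : ℝ) :
    Summable fun k : ℕ => if 2 ≤ k then b k * Real.cos (k * z) else 0 :=
  Summable.of_abs (hb.of_nonneg_of_le (fun _ => abs_nonneg _) (fun k => cser_term_bound b k z))

lemma cser_even (b : ℕ → ℝ) (z : ℝ) : cser b (-z) = cser b z := by
  unfold cser
  congr 1; funext k
  rw [show (k : ℝ) * (-z) = -(k * z) by ring, Real.cos_neg]

lemma cser_periodic (b : ℕ → ℝ) : Function.Periodic (cser b) (2 * π) := by
  intro z
  unfold cser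
  congr 1; funext k
  rw [show (k : ℝ) * (z + 2 * π) = k * z + k * (2 * π) by ring, Real.cos_add_nat_mul_two_pi]

lemma cser_bound (b : ℕ → ℝ) (hb : Summable fun k => |b k|) (z : ℝ) :
    |cser b z| ≤ ∑' k, |b k| := by
  unfold cser
  have hs : Summable fun k : ℕ => ‖if 2 ≤ k then b k * Real.cos (k * z) else 0‖ := by
    simpa [Real.norm_eq_abs] using (cser_summable b hb z).abs
  have h := norm_tsum_le_tsum_norm hs
  simp only [Real.norm_eq_abs] at h
  exact h.trans (Summable.tsum_le_tsum (fun k => cser_term_bound b k z) (cser_summable b hb z).abs hb)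

lemma tc_bound (g : ℝ → ℝ) (M : ℝ) (hM : ∀ x, |g x| ≤ M) (k : ℕ) : |tc g k| ≤ M * (2 * π) := by
  unfold tc
  have h := intervalIntegral.norm_integral_le_of_norm_le_const
    (C := M) (f := fun ξ => g ξ * Real.cos (k * ξ)) (a := -π) (b := π) ?_
  · rw [Real.norm_eq_abs] at h
    calc |∫ ξ in (-π)..π, g ξ * Real.cos (k * ξ)| ≤ M * |π - (-π)| := h
      _ = M * (2 * π) := by rw [abs_of_nonneg (by linarith [Real.pi_pos])]; ring
  · intro x _
    rw [Real.norm_eq_abs, abs_mul]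
    calc |g x| * |Real.cos (k * x)| ≤ M * 1 :=
        mul_le_mul (hM x) (Real.abs_cos_le_one _) (abs_nonneg _)
          (le_trans (abs_nonneg _) (hM x))
      _ = M := mul_one _

lemma Kop_eq (a : ℕ → ℝ) (ha : Summable fun k => |a k|) (g : ℝ → ℝ) (hg : Continuous g)
    (hge : ∀ x, g (-x) = g x) (M : ℝ) (hM : ∀ x, |g x| ≤ M) (z : ℝ) :
    (∫ ξ in (-π)..π, (∑' k : ℕ, if 2 ≤ k then a k * Real.cos (k * (z - ξ)) else 0) * g ξ)
      = cser (fun k => a k * tc g k) z := by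
  have hMnn : 0 ≤ M := le_trans (abs_nonneg _) (hM 0)
  have h1 : ∀ ξ : ℝ, (∑' k : ℕ, if 2 ≤ k then a k * Real.cos (k * (z - ξ)) else 0) * g ξ
      = ∑' k : ℕ, (if 2 ≤ k then a k * Real.cos (k * (z - ξ)) else 0) * g ξ :=
    fun ξ => tsum_mul_right.symm
  rw [intervalIntegral.integral_congr (fun ξ _ => h1 ξ)]
  rw [integral_tsum_swap _ ?hc (fun k => |a k| * M) (ha.mul_right M) ?hb]
  case hc =>
    intro k
    split_ifs with h
    · exact (continuous_const.mul (Real.continuous_cos.comp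
        (continuous_const.mul (continuous_const.sub continuous_id)))).mul hg
    · exact continuous_const.mul hg
  case hb =>
    intro k ξ
    rw [abs_mul]
    split_ifs with h
    · rw [abs_mul]
      calc |a k| * |Real.cos (k * (z - ξ))| * |g ξ| ≤ |a k| * 1 * M :=
          mul_le_mul (mul_le_mul_of_nonneg_left (Real.abs_cos_le_one _) (abs_nonneg _))
            (hM ξ) (abs_nonneg _) (by positivity)
        _ = |a k| * M := by ring
    · simp [mul_nonneg (abs_nonneg (a k)) hMnn]
  unfold cser
  refine tsum_congr fun k => ?_
  by_cases h : 2 ≤ k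
  · rw [if_pos h]
    have hpt : ∀ ξ : ℝ, (if 2 ≤ k then a k * Real.cos (k * (z - ξ)) else 0) * g ξ
        = (a k * Real.cos (k * z)) * (g ξ * Real.cos (k * ξ))
          + (a k * Real.sin (k * z)) * (g ξ * Real.sin (k * ξ)) := by
      intro ξ
      rw [if_pos h, show (k : ℝ) * (z - ξ) = k * z - k * ξ by ring, Real.cos_sub]
      ring
    rw [intervalIntegral.integral_congr (fun ξ _ => hpt ξ)]
    have int1 : IntervalIntegrable
        (fun ξ => (a k * Real.cos (k * z)) * (g ξ * Real.cos (k * ξ))) volume (-π) π :=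
      (continuous_const.mul (hg.mul (Real.continuous_cos.comp
        (continuous_const.mul continuous_id)))).intervalIntegrable _ _
    have int2 : IntervalIntegrable
        (fun ξ => (a k * Real.sin (k * z)) * (g ξ * Real.sin (k * ξ))) volume (-π) π :=
      (continuous_const.mul (hg.mul (Real.continuous_sin.comp
        (continuous_const.mul continuous_id)))).intervalIntegrable _ _
    rw [intervalIntegral.integral_add int1 int2, intervalIntegral.integral_const_mul,
      intervalIntegral.integral_const_mul]
    have hodd : (∫ ξ in (-π)..π, g ξ * Real.sin (k * ξ)) = 0 := by
      apply integral_odd_zero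
      intro x
      rw [hge, show (k : ℝ) * (-x) = -(k * x) by ring, Real.sin_neg]
      ring
    rw [hodd]
    unfold tc
    ring
  · rw [if_neg h]
    have : ∀ ξ : ℝ, (if 2 ≤ k then a k * Real.cos (k * (z - ξ)) else 0) * g ξ = 0 := by
      intro ξ; rw [if_neg h, zero_mul]
    rw [intervalIntegral.integral_congr (fun ξ _ => this ξ)]
    simp

lemma tc_cser (b : ℕ → ℝ) (hb : Summable fun k => |b k|) (j : ℕ) :
    tc (cser b) j = if 2 ≤ j then π * b j else 0 := by
  unfold tc cser
  have h1 : ∀ ξ : ℝ, (∑' k : ℕ, if 2 ≤ k then b k * Real.cos (k * ξ) else 0) * Real.cos (j * ξ)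
      = ∑' k : ℕ, (if 2 ≤ k then b k * Real.cos (k * ξ) else 0) * Real.cos (j * ξ) :=
    fun ξ => tsum_mul_right.symm
  rw [intervalIntegral.integral_congr (fun ξ _ => h1 ξ)]
  rw [integral_tsum_swap _ ?hc (fun k => |b k|) hb ?hb]
  case hc =>
    intro k
    split_ifs with h
    · exact (continuous_const.mul (Real.continuous_cos.comp
        (continuous_const.mul continuous_id))).mul
        (Real.continuous_cos.comp (continuous_const.mul continuous_id))
    · exact continuous_const.mul (Real.continuous_cos.comp (continuous_const.mul continuous_id))
  case hb =>
    intro k ξ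
    rw [abs_mul]
    split_ifs with h
    · rw [abs_mul]
      calc |b k| * |Real.cos (k * ξ)| * |Real.cos (j * ξ)| ≤ |b k| * 1 * 1 :=
          mul_le_mul (mul_le_mul_of_nonneg_left (Real.abs_cos_le_one _) (abs_nonneg _))
            (Real.abs_cos_le_one _) (abs_nonneg _) (by positivity)
        _ = |b k| := by ring
    · simp
  have hterm : ∀ k : ℕ, (∫ ξ in (-π)..π, (if 2 ≤ k then b k * Real.cos (k * ξ) else 0)
      * Real.cos (j * ξ)) = if 2 ≤ k then b k * (if k = j then π else 0) else 0 := by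
    intro k
    by_cases h : 2 ≤ k
    · rw [if_pos h]
      have hpt : ∀ ξ : ℝ, (if 2 ≤ k then b k * Real.cos (k * ξ) else 0) * Real.cos (j * ξ)
          = b k * (Real.cos (k * ξ) * Real.cos (j * ξ)) := by
        intro ξ; rw [if_pos h]; ring
      rw [intervalIntegral.integral_congr (fun ξ _ => hpt ξ),
        intervalIntegral.integral_const_mul]
      congr 1
      rcases Nat.eq_zero_or_pos j with hj | hj
      · subst hj
        simp only [Nat.cast_zero, zero_mul, Real.cos_zero, mul_one]
        have hk0 : (k : ℤ) ≠ 0 := by omega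
        have := integral_cos_int (k : ℤ) hk0
        simp only [Int.cast_natCast] at this
        rw [this]
        simp [show k ≠ 0 by omega]
      · rw [integral_cos_mul_cos_orth k j (by omega) hj]
    · rw [if_neg h]
      have : ∀ ξ : ℝ, (if 2 ≤ k then b k * Real.cos (k * ξ) else 0) * Real.cos (j * ξ) = 0 := by
        intro ξ; rw [if_neg h, zero_mul]
      rw [intervalIntegral.integral_congr (fun ξ _ => this ξ)]
      simp
  simp_rw [hterm]
  by_cases hj2 : 2 ≤ j
  · rw [if_pos hj2, tsum_eq_single j ?_]
    · simp [hj2, mul_comm]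
    · intro k hk
      by_cases h : 2 ≤ k
      · simp [h, hk]
      · simp [h]
  · rw [if_neg hj2]
    have : ∀ k : ℕ, (if 2 ≤ k then b k * (if k = j then π else 0) else 0) = 0 := by
      intro k
      by_cases h : 2 ≤ k
      · have : k ≠ j := by omega
        simp [h, this]
      · simp [h]
    simp_rw [this]
    exact tsum_zero

lemma integral_cser (b : ℕ → ℝ) (hb : Summable fun k => |b k|) :
    ∫ ξ in (-π)..π, cser b ξ = 0 := by
  unfold cser
  rw [integral_tsum_swap _ (fun k => by
      split_ifs
      · exact continuous_const.mul (Real.continuous_cos.comp (continuous_const.mul continuous_id))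
      · exact continuous_const)
    (fun k => |b k|) hb (fun k ξ => by
      split_ifs with h
      · rw [abs_mul]
        calc |b k| * |Real.cos (k * ξ)| ≤ |b k| * 1 :=
            mul_le_mul_of_nonneg_left (Real.abs_cos_le_one _) (abs_nonneg _)
          _ = |b k| := mul_one _
      · simp)]
  have hterm : ∀ k : ℕ, (∫ ξ in (-π)..π, if 2 ≤ k then b k * Real.cos (k * ξ) else 0) = 0 := by
    intro k
    by_cases h : 2 ≤ k
    · simp_rw [if_pos h]
      rw [intervalIntegral.integral_const_mul]
      have hk0 : (k : ℤ) ≠ 0 := by omega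
      have := integral_cos_int (k : ℤ) hk0
      simp only [Int.cast_natCast] at this
      rw [this, mul_zero]
    · simp_rw [if_neg h]
      simp
  simp_rw [hterm]
  exact tsum_zero

/-- Membership in `X_h`: continuous, `2π`-periodic, even functions orthogonal to `1`
and `cos`. -/
def memXh (v : ℝ → ℝ) : Prop :=
  Continuous v ∧ Function.Periodic v (2 * π) ∧ (∀ z, v (-z) = v z) ∧
  (∫ ξ in (-π)..π, v ξ) = 0 ∧ (∫ ξ in (-π)..π, v ξ * Real.cos ξ) = 0

-- main theorem part, appended after helpers + d.lean lemmas
section Main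

lemma tc_add (f g : ℝ → ℝ) (hf : Continuous f) (hg : Continuous g) (k : ℕ) :
    tc (fun x => f x + g x) k = tc f k + tc g k := by
  unfold tc
  have h : ∀ ξ : ℝ, (f ξ + g ξ) * Real.cos (k * ξ)
      = f ξ * Real.cos (k * ξ) + g ξ * Real.cos (k * ξ) := fun ξ => by ring
  have i1 : IntervalIntegrable (fun ξ : ℝ => f ξ * Real.cos (k * ξ)) volume (-π) π :=
    (hf.mul (Real.continuous_cos.comp (continuous_const.mul continuous_id))).intervalIntegrable _ _
  have i2 : IntervalIntegrable (fun ξ : ℝ => g ξ * Real.cos (k * ξ)) volume (-π) π :=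
    (hg.mul (Real.continuous_cos.comp (continuous_const.mul continuous_id))).intervalIntegrable _ _
  rw [intervalIntegral.integral_congr (fun ξ _ => h ξ), intervalIntegral.integral_add i1 i2]

lemma tc_sub (f g : ℝ → ℝ) (hf : Continuous f) (hg : Continuous g) (k : ℕ) :
    tc (fun x => f x - g x) k = tc f k - tc g k := by
  unfold tc
  have h : ∀ ξ : ℝ, (f ξ - g ξ) * Real.cos (k * ξ)
      = f ξ * Real.cos (k * ξ) - g ξ * Real.cos (k * ξ) := fun ξ => by ring
  have i1 : IntervalIntegrable (fun ξ : ℝ => f ξ * Real.cos (k * ξ)) volume (-π) π :=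
    (hf.mul (Real.continuous_cos.comp (continuous_const.mul continuous_id))).intervalIntegrable _ _
  have i2 : IntervalIntegrable (fun ξ : ℝ => g ξ * Real.cos (k * ξ)) volume (-π) π :=
    (hg.mul (Real.continuous_cos.comp (continuous_const.mul continuous_id))).intervalIntegrable _ _
  rw [intervalIntegral.integral_congr (fun ξ _ => h ξ), intervalIntegral.integral_sub i1 i2]

/-- The operator `𝓛_h v(z) = v(z) − ∫_{−π}^{π} ∑_{k≥2} v_k cos(k(z−ξ)) v(ξ) dξ` on `X_h`
is boundedly invertible provided `|v_k| < 1/π` for `k ≥ 2` and `∑ |v_k| < ∞`: for every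
`w ∈ X_h` there is a unique `v ∈ X_h` with `𝓛_h v = w`, and `‖v‖_∞ ≤ C ‖w‖_∞` with a
constant `C` independent of `w`. -/
theorem Lh_boundedly_invertible (vk : ℕ → ℝ)
    (hvk : ∀ k, 2 ≤ k → |vk k| < 1 / π)
    (hsum : Summable fun k : ℕ => |vk k|) :
    ∃ C > (0:ℝ), ∀ w : ℝ → ℝ, memXh w →
      ∃! v : ℝ → ℝ, memXh v ∧
        (∀ z : ℝ, v z - (∫ ξ in (-π)..π,
            (∑' k : ℕ, if 2 ≤ k then vk k * Real.cos (k * (z - ξ)) else 0) * v ξ) = w z) ∧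
        (⨆ z : ℝ, |v z|) ≤ C * (⨆ z : ℝ, |w z|) := by
  have hπ := Real.pi_pos
  have habs : ∀ k, 2 ≤ k → π * |vk k| < 1 := by
    intro k hk
    have h := hvk k hk
    rw [lt_div_iff₀ hπ] at h
    linarith
  have hne : ∀ k, 2 ≤ k → 1 - π * vk k ≠ 0 := by
    intro k hk h0
    have h1 := habs k hk
    have h2 : π * vk k ≤ π * |vk k| := mul_le_mul_of_nonneg_left (le_abs_self _) hπ.le
    linarith
  have hlb : ∀ k, 2 ≤ k → 1 - π * |vk k| ≤ |1 - π * vk k| := by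
    intro k hk
    have h2 : π * vk k ≤ π * |vk k| := mul_le_mul_of_nonneg_left (le_abs_self _) hπ.le
    calc 1 - π * |vk k| ≤ 1 - π * vk k := by
          have : -(π * |vk k|) ≤ π * vk k := by
            have := neg_abs_le (vk k)
            nlinarith
          linarith
      _ ≤ |1 - π * vk k| := le_abs_self _
  set u : ℕ → ℝ := fun k => if 2 ≤ k then vk k / (1 - π * vk k) else 0 with hu
  -- summability of |u|
  obtain ⟨N, hN⟩ := Filter.eventually_atTop.1
    (hsum.tendsto_atTop_zero.eventually (gt_mem_nhds (show (0:ℝ) < 1/(2*π) by positivity)))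
  have husum : Summable fun k => |u k| := by
    apply (summable_nat_add_iff N).1
    apply Summable.of_nonneg_of_le (fun n => abs_nonneg _) (fun n => ?_)
      (((summable_nat_add_iff N).2 hsum).mul_left 2)
    set k := n + N with hkdef
    have hkN : N ≤ k := by omega
    by_cases hk : 2 ≤ k
    · have hsmall : |vk k| < 1 / (2 * π) := hN k hkN
      have hhalf2 : π * |vk k| < 1/2 := by
        have h6 := mul_lt_mul_of_pos_left hsmall Real.pi_pos
        rwa [show π * (1/(2*π)) = 1/2 by field_simp] at h6
      have hhalf : (1:ℝ)/2 ≤ |1 - π * vk k| := by linarith [hlb k hk]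
      have hpos : (0:ℝ) < |1 - π * vk k| := by linarith
      simp only [hu, if_pos hk]
      rw [abs_div]
      rw [div_le_iff₀ hpos]
      nlinarith [abs_nonneg (vk k)]
    · simp only [hu, if_neg hk, abs_zero]
      positivity
  set C : ℝ := 1 + 2 * π * ∑' k, |u k| with hC
  have htsumu_nn : 0 ≤ ∑' k, |u k| := tsum_nonneg fun k => abs_nonneg _
  have hCpos : 0 < C := by positivity
  refine ⟨C, hCpos, fun w hw => ?_⟩
  obtain ⟨hwc, hwp, hwe, hw0, hw1⟩ := hw
  obtain ⟨z₀, hz₀⟩ := periodic_cont_bound w hwc hwp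
  have hbdd : BddAbove (Set.range fun z => |w z|) := by
    refine ⟨|w z₀|, ?_⟩
    rintro x ⟨y, rfl⟩
    exact hz₀ y
  set Sw : ℝ := ⨆ z : ℝ, |w z| with hSwdef
  have hSw : ∀ x, |w x| ≤ Sw := fun x => le_ciSup hbdd x
  have hSwnn : 0 ≤ Sw := le_trans (abs_nonneg _) (hSw 0)
  set bw : ℕ → ℝ := fun k => u k * tc w k with hbw
  have hbw_le : ∀ k, |bw k| ≤ |u k| * (Sw * (2 * π)) := by
    intro k
    rw [hbw, abs_mul]
    exact mul_le_mul_of_nonneg_left (tc_bound w Sw hSw k) (abs_nonneg _)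
  have hbw_sum : Summable fun k => |bw k| :=
    Summable.of_nonneg_of_le (fun k => abs_nonneg _) hbw_le (husum.mul_right _)
  set v : ℝ → ℝ := fun z => w z + cser bw z with hv
  have hvc : Continuous v := hwc.add (cser_cont bw hbw_sum)
  have hvp : Function.Periodic v (2 * π) := fun z => by
    simp only [hv]
    rw [hwp z, cser_periodic bw z]
  have hve : ∀ z, v (-z) = v z := fun z => by
    simp only [hv]
    rw [hwe z, cser_even bw z]
  have hintcser : IntervalIntegrable (cser bw) volume (-π) π :=
    (cser_cont bw hbw_sum).intervalIntegrable _ _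
  have hv0 : (∫ ξ in (-π)..π, v ξ) = 0 := by
    simp only [hv]
    rw [intervalIntegral.integral_add (hwc.intervalIntegrable _ _) hintcser, hw0,
      integral_cser bw hbw_sum, add_zero]
  have hcser1 : (∫ ξ in (-π)..π, cser bw ξ * Real.cos ξ) = 0 := by
    have h := tc_cser bw hbw_sum 1
    simp only [show ¬(2 ≤ 1) by norm_num, if_false] at h
    unfold tc at h
    simpa using h
  have hv1 : (∫ ξ in (-π)..π, v ξ * Real.cos ξ) = 0 := by
    simp only [hv]
    have h : ∀ ξ : ℝ, (w ξ + cser bw ξ) * Real.cos ξ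
        = w ξ * Real.cos ξ + cser bw ξ * Real.cos ξ := fun ξ => by ring
    rw [intervalIntegral.integral_congr (fun ξ _ => h ξ),
      intervalIntegral.integral_add (f := fun ξ => w ξ * Real.cos ξ)
        (g := fun ξ => cser bw ξ * Real.cos ξ)
        ((hwc.mul Real.continuous_cos).intervalIntegrable _ _)
        (((cser_cont bw hbw_sum).mul Real.continuous_cos).intervalIntegrable _ _),
      hw1, hcser1, add_zero]
  have hvmem : memXh v := ⟨hvc, hvp, hve, hv0, hv1⟩
  set Mv : ℝ := Sw + ∑' k, |bw k| with hMv
  have hMvb : ∀ x, |v x| ≤ Mv := by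
    intro x
    simp only [hv]
    calc |w x + cser bw x| ≤ |w x| + |cser bw x| := abs_add_le _ _
      _ ≤ Sw + ∑' k, |bw k| := add_le_add (hSw x) (cser_bound bw hbw_sum x)
  -- key algebra
  have hkey : ∀ k, 2 ≤ k → vk k * (1 + π * u k) = u k := by
    intro k hk
    simp only [hu, if_pos hk]
    have h' : 1 - π * vk k ≠ 0 := hne k hk
    rw [eq_div_iff h', mul_assoc, add_mul, one_mul, mul_div_assoc', div_mul_cancel₀ _ h']
    ring
  -- tc of v
  have htcv : ∀ k, tc v k = tc w k + (if 2 ≤ k then π * bw k else 0) := by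
    intro k
    simp only [hv]
    rw [tc_add w (cser bw) hwc (cser_cont bw hbw_sum) k, tc_cser bw hbw_sum k]
  -- the equation
  have heq : ∀ z : ℝ, v z - (∫ ξ in (-π)..π,
      (∑' k : ℕ, if 2 ≤ k then vk k * Real.cos (k * (z - ξ)) else 0) * v ξ) = w z := by
    intro z
    rw [Kop_eq vk hsum v hvc hve Mv hMvb z]
    have hcs : cser (fun k => vk k * tc v k) z = cser bw z := by
      unfold cser
      refine tsum_congr fun k => ?_
      by_cases hk : 2 ≤ k
      · rw [if_pos hk, if_pos hk]
        beta_reduce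
        rw [htcv k, if_pos hk]
        have hcoef : vk k * (tc w k + π * (u k * tc w k)) = u k * tc w k := by
          have h5 := hkey k hk
          calc vk k * (tc w k + π * (u k * tc w k)) = vk k * (1 + π * u k) * tc w k := by ring
            _ = u k * tc w k := by rw [h5]
        simp only [hbw]
        rw [hcoef]
      · rw [if_neg hk, if_neg hk]
    rw [hcs]
    simp only [hv]
    ring
  -- the bound
  have hbound : (⨆ z : ℝ, |v z|) ≤ C * Sw := by
    apply ciSup_le
    intro z
    have h1 : (∑' k, |bw k|) ≤ (∑' k, |u k|) * (Sw * (2 * π)) := by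
      calc (∑' k, |bw k|) ≤ ∑' k, |u k| * (Sw * (2 * π)) :=
            Summable.tsum_le_tsum hbw_le hbw_sum (husum.mul_right _)
        _ = (∑' k, |u k|) * (Sw * (2 * π)) := tsum_mul_right
    calc |v z| ≤ Mv := hMvb z
      _ = Sw + ∑' k, |bw k| := rfl
      _ ≤ Sw + (∑' k, |u k|) * (Sw * (2 * π)) := by linarith
      _ = C * Sw := by rw [hC]; ring
  refine ⟨v, ⟨hvmem, heq, hbound⟩, ?_⟩
  -- uniqueness
  rintro v' ⟨⟨hv'c, hv'p, hv'e, hv'0, hv'1⟩, hv'eq, _⟩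
  obtain ⟨z₁, hz₁⟩ := periodic_cont_bound v' hv'c hv'p
  set h : ℝ → ℝ := fun z => v' z - v z with hh
  have hhc : Continuous h := hv'c.sub hvc
  have hhp : Function.Periodic h (2 * π) := fun z => by
    simp only [hh]; rw [hv'p z, hvp z]
  have hhe : ∀ z, h (-z) = h z := fun z => by
    simp only [hh]; rw [hv'e z, hve z]
  obtain ⟨z₂, hz₂⟩ := periodic_cont_bound h hhc hhp
  set Mh : ℝ := |h z₂| with hMh
  have hMhb : ∀ x, |h x| ≤ Mh := hz₂
  have hMv' : ∀ x, |v' x| ≤ |v' z₁| := hz₁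
  -- h = K h pointwise
  have hhK : ∀ z, h z = cser (fun k => vk k * tc h k) z := by
    intro z
    have e1 := hv'eq z
    have e2 := heq z
    have e3 : h z = (∫ ξ in (-π)..π,
        (∑' k : ℕ, if 2 ≤ k then vk k * Real.cos (k * (z - ξ)) else 0) * v' ξ)
      - (∫ ξ in (-π)..π,
        (∑' k : ℕ, if 2 ≤ k then vk k * Real.cos (k * (z - ξ)) else 0) * v ξ) := by
      simp only [hh]; linarith
    rw [e3, Kop_eq vk hsum v' hv'c hv'e _ hMv' z, Kop_eq vk hsum v hvc hve Mv hMvb z]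
    have hsum1 : Summable fun k : ℕ =>
        if 2 ≤ k then vk k * tc v' k * Real.cos (k * z) else 0 := by
      apply cser_summable
      apply Summable.of_nonneg_of_le (fun k => abs_nonneg _) (fun k => ?_)
        (hsum.mul_right (|v' z₁| * (2 * π)))
      rw [abs_mul]
      exact mul_le_mul_of_nonneg_left (tc_bound v' _ hMv' k) (abs_nonneg _)
    have hsum2 : Summable fun k : ℕ =>
        if 2 ≤ k then vk k * tc v k * Real.cos (k * z) else 0 := by
      apply cser_summable
      apply Summable.of_nonneg_of_le (fun k => abs_nonneg _) (fun k => ?_)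
        (hsum.mul_right (Mv * (2 * π)))
      rw [abs_mul]
      exact mul_le_mul_of_nonneg_left (tc_bound v _ hMvb k) (abs_nonneg _)
    unfold cser
    rw [← Summable.tsum_sub hsum1 hsum2]
    refine tsum_congr fun k => ?_
    by_cases hk : 2 ≤ k
    · simp only [if_pos hk]
      have : tc h k = tc v' k - tc v k := tc_sub v' v hv'c hvc k
      rw [this]; ring
    · simp only [if_neg hk, sub_zero]
  -- coefficients of h vanish
  have hsumh : Summable fun k => |vk k * tc h k| := by
    apply Summable.of_nonneg_of_le (fun k => abs_nonneg _) (fun k => ?_)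
      (hsum.mul_right (Mh * (2 * π)))
    rw [abs_mul]
    exact mul_le_mul_of_nonneg_left (tc_bound h _ hMhb k) (abs_nonneg _)
  have htch : ∀ j, 2 ≤ j → tc h j = 0 := by
    intro j hj
    have he : h = cser (fun k => vk k * tc h k) := funext hhK
    have h2 : tc h j = π * (vk j * tc h j) := by
      conv_lhs => rw [he]
      rw [tc_cser _ hsumh j, if_pos hj]
    have h3 : (1 - π * vk j) * tc h j = 0 := by linarith [h2]
    rcases mul_eq_zero.1 h3 with h4 | h4
    · exact absurd h4 (hne j hj)
    · exact h4
  -- conclude h = 0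
  funext z
  have hz : h z = 0 := by
    rw [hhK z]
    unfold cser
    have : ∀ k : ℕ, (if 2 ≤ k then vk k * tc h k * Real.cos (k * z) else 0) = 0 := by
      intro k
      by_cases hk : 2 ≤ k
      · rw [if_pos hk, htch k hk]; ring
      · rw [if_neg hk]
    simp_rw [this]
    exact tsum_zero
  simp only [hh] at hz
  linarith

end Main
end
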